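/- Let Γ be a finite group and J_Γ = Z[Γ]/Z the cokernel of the norm map N: Z → Z[Γ] sending 1 to the sum of all group elements. Then for every subgroup Γ' ⊆ Γ, the Tate–Shafarevich group Ш²(Γ', J_Γ) := ker[H²(Γ', J_Γ) → ∏_C H²(C, J_Γ)], the product over all cyclic subgroups C of Γ', is isomorphic to H³(Γ', Z). -/

import Mathlib

/-! Basic definitions: Γ-lattices, permutation / quasi-permutation / invertible /
quasi-invertible lattices, group cohomology via inhomogeneous cochains,
Tate–Shafarevich groups, and the lattice `J_Γ = ℤ[Γ]/ℤ`. -/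

/-- A bundled additive module with an action of the group `Γ`. -/
structure GammaMod (Γ : Type) [Group Γ] : Type 1 where
  carrier : Type
  [acg : AddCommGroup carrier]
  [act : DistribMulAction Γ carrier]

attribute [instance] GammaMod.acg GammaMod.act

section Lattices

variable {Γ : Type} [Group Γ]

/-- A permutation `Γ`-lattice: it admits a finite `ℤ`-basis permuted by `Γ`. -/
def IsPermutation (P : GammaMod Γ) : Prop :=
  ∃ (ι : Type) (_ : Fintype ι) (b : Module.Basis ι ℤ P.carrier),
    ∀ (γ : Γ) (i : ι), ∃ j, γ • (b i) = b j

/-- A `Γ`-equivariant additive map. -/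
def IsEquivariant {A B : GammaMod Γ} (f : A.carrier →+ B.carrier) : Prop :=
  ∀ (γ : Γ) (x : A.carrier), f (γ • x) = γ • f x

/-- `0 → A → B → C → 0` is short exact. -/
def IsShortExact {A B C : GammaMod Γ} (f : A.carrier →+ B.carrier)
    (g : B.carrier →+ C.carrier) : Prop :=
  Function.Injective f ∧ Function.Surjective g ∧ ∀ y, g y = 0 ↔ y ∈ Set.range f

/-- A quasi-permutation `Γ`-lattice: it fits into a short exact sequence
`0 → L → P → P' → 0` with `P`, `P'` permutation lattices. -/
def IsQuasiPermutation (L : GammaMod Γ) : Prop :=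
  ∃ (P P' : GammaMod Γ), IsPermutation P ∧ IsPermutation P' ∧
    ∃ (f : L.carrier →+ P.carrier) (g : P.carrier →+ P'.carrier),
      IsEquivariant f ∧ IsEquivariant g ∧ IsShortExact f g

/-- `A` is a direct summand of `B` (equivariantly). -/
def IsDirectSummandOf (A B : GammaMod Γ) : Prop :=
  ∃ (i : A.carrier →+ B.carrier) (r : B.carrier →+ A.carrier),
    IsEquivariant i ∧ IsEquivariant r ∧ r.comp i = AddMonoidHom.id _

/-- An invertible `Γ`-lattice: a direct summand of a permutation lattice. -/
def IsInvertibleLat (I : GammaMod Γ) : Prop :=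
  ∃ P : GammaMod Γ, IsPermutation P ∧ IsDirectSummandOf I P

/-- A quasi-invertible `Γ`-lattice: a direct summand of a quasi-permutation lattice. -/
def IsQuasiInvertible (L : GammaMod Γ) : Prop :=
  ∃ Q : GammaMod Γ, IsQuasiPermutation Q ∧ IsDirectSummandOf L Q

end Lattices

/-- The action of `G` on an invariant additive subgroup. -/
def subAction {G M : Type} [Group G] [AddCommGroup M] [DistribMulAction G M]
    (S : AddSubgroup M) (h : ∀ (g : G) (x : M), x ∈ S → g • x ∈ S) :
    DistribMulAction G S where
  smul g x := ⟨g • (x : M), h g x x.2⟩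
  one_smul x := Subtype.ext (one_smul G (x : M))
  mul_smul g g' x := Subtype.ext (mul_smul g g' (x : M))
  smul_zero g := Subtype.ext (smul_zero g)
  smul_add g x y := Subtype.ext (smul_add g (x : M) (y : M))

section Cohomology

variable (G : Type) [Group G] (M : Type) [AddCommGroup M] [DistribMulAction G M]

/-- Inhomogeneous 2-cocycle condition. -/
def IsCocycle2 (f : G → G → M) : Prop :=
  ∀ g h k : G, g • f h k + f g (h * k) = f (g * h) k + f g h

/-- Inhomogeneous 2-coboundary condition. -/
def IsCoboundary2 (f : G → G → M) : Prop :=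
  ∃ φ : G → M, ∀ g h : G, f g h = g • φ h + φ g - φ (g * h)

/-- Inhomogeneous 3-cocycle condition. -/
def IsCocycle3 (f : G → G → G → M) : Prop :=
  ∀ g h k l : G,
    g • f h k l + f g (h * k) l + f g h k = f (g * h) k l + f g h (k * l)

/-- Inhomogeneous 3-coboundary condition. -/
def IsCoboundary3 (f : G → G → G → M) : Prop :=
  ∃ φ : G → G → M, ∀ g h k : G,
    f g h k = g • φ h k - φ (g * h) k + φ g (h * k) - φ g h

/-- The subgroup of 2-cocycles. -/
def cocycles2 : AddSubgroup (G → G → M) where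
  carrier := {f | IsCocycle2 G M f}
  add_mem' := by
    intro f g hf hg a b c
    have := congrArg₂ (· + ·) (hf a b c) (hg a b c)
    simp only [Pi.add_apply, smul_add]
    abel_nf at this ⊢
    exact this
  zero_mem' := by intro a b c; simp
  neg_mem' := by
    intro f hf a b c
    have := congrArg Neg.neg (hf a b c)
    simp only [Pi.neg_apply, smul_neg]
    abel_nf at this ⊢
    exact this

/-- The subgroup of 2-coboundaries. -/
def coboundaries2 : AddSubgroup (G → G → M) where
  carrier := {f | IsCoboundary2 G M f}
  add_mem' := by
    rintro f g ⟨φ, hφ⟩ ⟨ψ, hψ⟩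
    refine ⟨φ + ψ, fun a b => ?_⟩
    simp only [Pi.add_apply, smul_add, hφ a b, hψ a b]
    abel
  zero_mem' := ⟨0, by intro a b; simp⟩
  neg_mem' := by
    rintro f ⟨φ, hφ⟩
    refine ⟨-φ, fun a b => ?_⟩
    simp only [Pi.neg_apply, smul_neg, hφ a b]
    abel

/-- The subgroup of 3-cocycles. -/
def cocycles3 : AddSubgroup (G → G → G → M) where
  carrier := {f | IsCocycle3 G M f}
  add_mem' := by
    intro f g hf hg a b c d
    have := congrArg₂ (· + ·) (hf a b c d) (hg a b c d)
    simp only [Pi.add_apply, smul_add]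
    abel_nf at this ⊢
    exact this
  zero_mem' := by intro a b c d; simp
  neg_mem' := by
    intro f hf a b c d
    have := congrArg Neg.neg (hf a b c d)
    simp only [Pi.neg_apply, smul_neg]
    abel_nf at this ⊢
    exact this

/-- The subgroup of 3-coboundaries. -/
def coboundaries3 : AddSubgroup (G → G → G → M) where
  carrier := {f | IsCoboundary3 G M f}
  add_mem' := by
    rintro f g ⟨φ, hφ⟩ ⟨ψ, hψ⟩
    refine ⟨φ + ψ, fun a b c => ?_⟩
    simp only [Pi.add_apply, smul_add, hφ a b c, hψ a b c]
    abel
  zero_mem' := ⟨0, by intro a b c; simp⟩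
  neg_mem' := by
    rintro f ⟨φ, hφ⟩
    refine ⟨-φ, fun a b c => ?_⟩
    simp only [Pi.neg_apply, smul_neg, hφ a b c]
    abel

/-- Third group cohomology `H³(G, M)`, via inhomogeneous cochains. -/
abbrev H3 := cocycles3 G M ⧸ ((coboundaries3 G M).addSubgroupOf (cocycles3 G M))

/-- The subgroup of 2-cocycles whose restriction to every cyclic subgroup is a
coboundary. -/
def shaCocycles : AddSubgroup (G → G → M) where
  carrier := {f | IsCocycle2 G M f ∧ ∀ (C : Subgroup G), IsCyclic C →
      IsCoboundary2 C M (fun a b : C => f a b)}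
  add_mem' := by
    rintro f g ⟨hf1, hf2⟩ ⟨hg1, hg2⟩
    refine ⟨(cocycles2 G M).add_mem hf1 hg1, fun C hC => ?_⟩
    obtain ⟨φ, hφ⟩ := hf2 C hC
    obtain ⟨ψ, hψ⟩ := hg2 C hC
    refine ⟨φ + ψ, fun a b => ?_⟩
    simp only [Pi.add_apply, smul_add, hφ a b, hψ a b]
    abel
  zero_mem' := by
    refine ⟨(cocycles2 G M).zero_mem, fun C hC => ⟨0, by intro a b; simp⟩⟩
  neg_mem' := by
    rintro f ⟨hf1, hf2⟩
    refine ⟨(cocycles2 G M).neg_mem hf1, fun C hC => ?_⟩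
    obtain ⟨φ, hφ⟩ := hf2 C hC
    refine ⟨-φ, fun a b => ?_⟩
    simp only [Pi.neg_apply, smul_neg, hφ a b]
    abel

/-- The Tate–Shafarevich group `Ш²(G, M)`: the kernel of
`H²(G,M) → ∏_C H²(C,M)` over all cyclic subgroups `C ⊆ G`, realized as
(locally trivial 2-cocycles) / (2-coboundaries). -/
abbrev Sha2 := shaCocycles G M ⧸ ((coboundaries2 G M).addSubgroupOf (shaCocycles G M))

end Cohomology

/-- `M` with the trivial action of `G`. -/
def TrivAct (G M : Type) : Type := M

instance (G M : Type) [AddCommGroup M] : AddCommGroup (TrivAct G M) :=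
  inferInstanceAs (AddCommGroup M)

instance (G M : Type) [Group G] [AddCommGroup M] : DistribMulAction G (TrivAct G M) where
  smul _ m := m
  one_smul _ := rfl
  mul_smul _ _ _ := rfl
  smul_zero _ := rfl
  smul_add _ _ _ := rfl

section JGamma

/-- The subgroup of `ℤ[Γ] = (Γ → ℤ)` generated by the norm element `∑_{s∈Γ} s`
(the constant function `1`). -/
def normSub (Γ : Type) : AddSubgroup (Γ → ℤ) :=
  AddSubgroup.zmultiples (fun _ => (1 : ℤ))

/-- The lattice `J_Γ = ℤ[Γ]/ℤ`, the cokernel of the norm map `ℤ → ℤ[Γ]`.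
Here `ℤ[Γ]` is modelled as functions `Γ → ℤ` with `Γ` acting by left translation;
the norm element is the constant function `1`. -/
abbrev JLat (Γ : Type) := (Γ → ℤ) ⧸ normSub Γ

variable {Γ : Type} [Group Γ]

/-- Left translation on `ℤ[Γ] = (Γ → ℤ)`. -/
def shiftHom (g : Γ) : (Γ → ℤ) →+ (Γ → ℤ) where
  toFun f := fun h => f (g⁻¹ * h)
  map_zero' := rfl
  map_add' _ _ := rfl

instance : DistribMulAction Γ (JLat Γ) where
  smul g := fun x => QuotientAddGroup.map _ _ (shiftHom g)
    (by rintro f ⟨n, rfl⟩; exact ⟨n, rfl⟩) x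
  one_smul := by
    intro x
    refine QuotientAddGroup.induction_on x fun f => ?_
    show QuotientAddGroup.map _ _ _ _ _ = _
    rw [QuotientAddGroup.map_mk]
    congr 1
    funext h
    simp [shiftHom]
  mul_smul := by
    intro g g' x
    refine QuotientAddGroup.induction_on x fun f => ?_
    show QuotientAddGroup.map _ _ _ _ _ =
      QuotientAddGroup.map _ _ _ _ (QuotientAddGroup.map _ _ _ _ _)
    rw [QuotientAddGroup.map_mk, QuotientAddGroup.map_mk, QuotientAddGroup.map_mk]
    congr 1
    funext h
    simp [shiftHom, mul_assoc]
  smul_zero := by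
    intro g
    exact map_zero (QuotientAddGroup.map _ _ (shiftHom g)
      (by rintro f ⟨n, rfl⟩; exact ⟨n, rfl⟩))
  smul_add := by
    intro g x y
    exact map_add (QuotientAddGroup.map _ _ (shiftHom g)
      (by rintro f ⟨n, rfl⟩; exact ⟨n, rfl⟩)) x y

end JGamma


/-! ### Auxiliary machinery -/

section AuxBasic

variable {Γ : Type} [Group Γ]

/-- Quotient map onto `J_Γ`. -/
noncomputable def mkJ : (Γ → ℤ) →+ JLat Γ := QuotientAddGroup.mk' (normSub Γ)

lemma mem_normSub_iff {x : Γ → ℤ} : x ∈ normSub Γ ↔ ∃ n : ℤ, x = fun _ => n := by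
  constructor
  · rintro ⟨n, rfl⟩; exact ⟨n, by funext γ; simp⟩
  · rintro ⟨n, rfl⟩; exact ⟨n, by funext γ; simp⟩

lemma mkJ_eq_zero {x : Γ → ℤ} : mkJ x = 0 ↔ ∃ n : ℤ, x = fun _ => n :=
  (QuotientAddGroup.eq_zero_iff x).trans mem_normSub_iff

lemma mkJ_out (y : JLat Γ) : mkJ (Quotient.out y) = y := QuotientAddGroup.out_eq' y

lemma smul_mkJ (γ : Γ) (x : Γ → ℤ) : γ • (mkJ x) = mkJ (shiftHom γ x) :=
  QuotientAddGroup.map_mk _ _ _ _ x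

@[simp] lemma shiftHom_apply (γ : Γ) (x : Γ → ℤ) (δ : Γ) :
    shiftHom γ x δ = x (γ⁻¹ * δ) := rfl

lemma shiftHom_const (γ : Γ) (n : ℤ) : shiftHom γ (fun _ => n) = fun _ => n := rfl

@[simp] lemma trivAct_smul {G : Type} [Group G] (g : G) (x : TrivAct G ℤ) : g • x = x := rfl

end AuxBasic
section Vanish

variable {Γ : Type} [Group Γ] {G : Type} [Group G] (φ : G →* Γ)

/-- A representative of the right coset `φ(G)·γ`, inverted. -/
noncomputable def oElt (γ : Γ) : Γ := Quotient.out (QuotientGroup.mk γ⁻¹ : Γ ⧸ φ.range)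

lemma oElt_mem (γ : Γ) : γ * oElt φ γ ∈ φ.range := by
  have h : (QuotientGroup.mk (oElt φ γ) : Γ ⧸ φ.range) = QuotientGroup.mk γ⁻¹ :=
    QuotientGroup.out_eq' _
  have h1 := QuotientGroup.eq.mp h
  have h2 := φ.range.inv_mem h1
  simpa [mul_inv_rev] using h2

/-- The `G`-part of `γ` in the coset decomposition. -/
noncomputable def pElt (γ : Γ) : G :=
  Classical.choose (MonoidHom.mem_range.mp (oElt_mem φ γ))

lemma pElt_spec (γ : Γ) : φ (pElt φ γ) = γ * oElt φ γ :=
  Classical.choose_spec (MonoidHom.mem_range.mp (oElt_mem φ γ))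

lemma pElt_mul (γ : Γ) : φ (pElt φ γ) * (oElt φ γ)⁻¹ = γ := by
  rw [pElt_spec]; group

lemma oElt_shift (g : G) (γ : Γ) : oElt φ ((φ g)⁻¹ * γ) = oElt φ γ := by
  unfold oElt
  have : (QuotientGroup.mk (((φ g)⁻¹ * γ)⁻¹) : Γ ⧸ φ.range) = QuotientGroup.mk γ⁻¹ := by
    rw [mul_inv_rev, inv_inv]
    exact QuotientGroup.eq.mpr (by simpa using φ.range.inv_mem ⟨g, rfl⟩)
  rw [this]

lemma pElt_shift (hφ : Function.Injective φ) (g : G) (γ : Γ) :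
    pElt φ ((φ g)⁻¹ * γ) = g⁻¹ * pElt φ γ := by
  apply hφ
  rw [map_mul, map_inv, pElt_spec, pElt_spec, oElt_shift]
  group

/-- Vanishing of `H²(G, ℤ[Γ])` for the translation action via `φ`. -/
lemma h2_vanish (hφ : Function.Injective φ) (F : G → G → Γ → ℤ)
    (hc : ∀ g h k : G, shiftHom (φ g) (F h k) + F g (h * k) = F (g * h) k + F g h) :
    ∃ Φ : G → Γ → ℤ, ∀ g h, F g h = shiftHom (φ g) (Φ h) + Φ g - Φ (g * h) := by
  refine ⟨fun g γ => F (pElt φ γ)⁻¹ g ((oElt φ γ)⁻¹), ?_⟩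
  intro g h
  funext γ
  set q := pElt φ γ with hq
  set r := (oElt φ γ)⁻¹ with hr
  have e1 : shiftHom (φ g) (fun γ' => F (pElt φ γ')⁻¹ h ((oElt φ γ')⁻¹)) γ
      = F (q⁻¹ * g) h r := by
    show F (pElt φ ((φ g)⁻¹ * γ))⁻¹ h ((oElt φ ((φ g)⁻¹ * γ))⁻¹) = _
    rw [pElt_shift φ hφ, oElt_shift, mul_inv_rev, inv_inv]
  have key := congrFun (hc q⁻¹ g h) r
  simp only [Pi.add_apply] at key
  have e2 : shiftHom (φ q⁻¹) (F g h) r = F g h γ := by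
    show F g h ((φ q⁻¹)⁻¹ * r) = _
    rw [map_inv, inv_inv, hr, pElt_mul]
  rw [e2] at key
  simp only [Pi.add_apply, Pi.sub_apply, e1]
  rw [← hq, ← hr]
  omega

/-- Vanishing of `H³(G, ℤ[Γ])` for the translation action via `φ`. -/
lemma h3_vanish (hφ : Function.Injective φ) (F : G → G → G → Γ → ℤ)
    (hc : ∀ g h k l : G, shiftHom (φ g) (F h k l) + F g (h * k) l + F g h k
      = F (g * h) k l + F g h (k * l)) :
    ∃ Φ : G → G → Γ → ℤ, ∀ g h k,
      F g h k = shiftHom (φ g) (Φ h k) - Φ (g * h) k + Φ g (h * k) - Φ g h := by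
  refine ⟨fun g h γ => F (pElt φ γ)⁻¹ g h ((oElt φ γ)⁻¹), ?_⟩
  intro g h k
  funext γ
  set q := pElt φ γ with hq
  set r := (oElt φ γ)⁻¹ with hr
  have e1 : shiftHom (φ g) (fun γ' => F (pElt φ γ')⁻¹ h k ((oElt φ γ')⁻¹)) γ
      = F (q⁻¹ * g) h k r := by
    show F (pElt φ ((φ g)⁻¹ * γ))⁻¹ h k ((oElt φ ((φ g)⁻¹ * γ))⁻¹) = _
    rw [pElt_shift φ hφ, oElt_shift, mul_inv_rev, inv_inv]
  have key := congrFun (hc q⁻¹ g h k) r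
  simp only [Pi.add_apply] at key
  have e2 : shiftHom (φ q⁻¹) (F g h k) r = F g h k γ := by
    show F g h k ((φ q⁻¹)⁻¹ * r) = _
    rw [map_inv, inv_inv, hr, pElt_mul]
  rw [e2] at key
  simp only [Pi.add_apply, Pi.sub_apply, e1]
  rw [← hq, ← hr]
  omega

end Vanish
section Connecting

variable {Γ : Type} [Group Γ] {G : Type} [Group G] (φ : G →* Γ)

/-- Inhomogeneous differential from 2-cochains to 3-cochains, values in `ℤ[Γ]`. -/
def D3 (F : G → G → Γ → ℤ) : G → G → G → Γ → ℤ :=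
  fun g h k => shiftHom (φ g) (F h k) - F (g * h) k + F g (h * k) - F g h

lemma D3_cocycle (F : G → G → Γ → ℤ) (g h k l : G) :
    shiftHom (φ g) (D3 φ F h k l) + D3 φ F g (h * k) l + D3 φ F g h k
      = D3 φ F (g * h) k l + D3 φ F g h (k * l) := by
  funext γ
  simp only [D3, Pi.add_apply, Pi.sub_apply, shiftHom_apply, map_mul, mul_inv_rev, mul_assoc]
  ring

lemma D3_add (F F' : G → G → Γ → ℤ) (g h k : G) (γ : Γ) :
    D3 φ (fun a b => F a b + F' a b) g h k γ = D3 φ F g h k γ + D3 φ F' g h k γ := by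
  simp only [D3, Pi.add_apply, Pi.sub_apply, shiftHom_apply]
  ring

lemma D3_const (c : G → G → ℤ) (g h k : G) (γ : Γ) :
    D3 φ (fun a b => (fun _ => c a b : Γ → ℤ)) g h k γ
      = c h k - c (g * h) k + c g (h * k) - c g h := by
  simp only [D3, Pi.add_apply, Pi.sub_apply, shiftHom_apply]

lemma D3_d2 (Φ : G → Γ → ℤ) (g h k : G) (γ : Γ) :
    D3 φ (fun a b => shiftHom (φ a) (Φ b) + Φ a - Φ (a * b)) g h k γ = 0 := by
  simp only [D3, Pi.add_apply, Pi.sub_apply, shiftHom_apply, map_mul, mul_inv_rev, mul_assoc]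
  ring

/-- A set-theoretic lift of a `J`-valued 2-cochain to `ℤ[Γ]`. -/
noncomputable def liftF (f : G → G → JLat Γ) : G → G → Γ → ℤ :=
  fun g h => Quotient.out (f g h)

lemma mkJ_liftF (f : G → G → JLat Γ) (g h : G) : mkJ (liftF f g h) = f g h := mkJ_out _

/-- The connecting 3-cochain: the defect of the lift, an integer because the
image of the defect in `J` vanishes. -/
noncomputable def errF (f : G → G → JLat Γ) : G → G → G → ℤ :=
  fun g h k => D3 φ (liftF f) g h k 1

/-- The cocycle hypothesis on `f`, phrased at the level of lifts. -/
def LCoc (f : G → G → JLat Γ) : Prop :=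
  ∀ g h k : G, mkJ (shiftHom (φ g) (liftF f h k)) + f g (h * k) = f (g * h) k + f g h

lemma D3_lift_const {f : G → G → JLat Γ} (hf : LCoc φ f) (g h k : G) :
    D3 φ (liftF f) g h k = fun _ => errF φ f g h k := by
  have h0 : mkJ (D3 φ (liftF f) g h k) = 0 := by
    have h1 := hf g h k
    simp only [D3, map_add, map_sub, mkJ_liftF]
    have h2 : mkJ ((shiftHom (φ g)) (liftF f h k)) - f (g * h) k + f g (h * k) - f g h
        = (mkJ ((shiftHom (φ g)) (liftF f h k)) + f g (h * k)) - (f (g * h) k + f g h) := by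
      abel
    rw [h2, h1, sub_self]
  obtain ⟨n, hn⟩ := mkJ_eq_zero.mp h0
  have hval : errF φ f g h k = n := by
    show D3 φ (liftF f) g h k 1 = n
    rw [hn]
  rw [hn, hval]

lemma errF_cocycle {f : G → G → JLat Γ} (hf : LCoc φ f) (g h k l : G) :
    errF φ f h k l + errF φ f g (h * k) l + errF φ f g h k
      = errF φ f (g * h) k l + errF φ f g h (k * l) := by
  have key := congrFun (D3_cocycle φ (liftF f) g h k l) 1
  simp only [Pi.add_apply] at key
  have e1 : shiftHom (φ g) (D3 φ (liftF f) h k l) 1 = errF φ f h k l := by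
    rw [D3_lift_const φ hf]
    rfl
  rw [e1] at key
  exact key

/-- Main descent lemma: if the connecting 3-cocycle of `f` is a coboundary,
then `f` itself is a coboundary (using `H²(G, ℤ[Γ]) = 0`). -/
lemma main_coboundary (hφ : Function.Injective φ) {f : G → G → JLat Γ} (hf : LCoc φ f)
    (c : G → G → ℤ)
    (hc : ∀ g h k, errF φ f g h k = c h k - c (g * h) k + c g (h * k) - c g h) :
    ∃ Ψ : G → Γ → ℤ, ∀ g h,
      f g h = mkJ (shiftHom (φ g) (Ψ h)) + mkJ (Ψ g) - mkJ (Ψ (g * h)) := by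
  set X : G → G → Γ → ℤ := fun g h => liftF f g h - (fun _ => c g h) with hX
  have hXc : ∀ g h k : G, shiftHom (φ g) (X h k) + X g (h * k) = X (g * h) k + X g h := by
    intro g h k
    funext γ
    have h1 : D3 φ X g h k γ = 0 := by
      have h2 : ∀ a b : G, X a b = liftF f a b + (fun _ => (-c a b) : Γ → ℤ) := by
        intro a b; funext δ
        simp [hX, sub_eq_add_neg]
      have h3 : D3 φ X g h k γ
          = D3 φ (liftF f) g h k γ + D3 φ (fun a b => (fun _ => (-c a b) : Γ → ℤ)) g h k γ := by
        rw [show D3 φ X = D3 φ (fun a b => liftF f a b + (fun _ => (-c a b) : Γ → ℤ)) by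
          rw [show X = fun a b => liftF f a b + (fun _ => (-c a b) : Γ → ℤ) from funext fun a => funext fun b => h2 a b]]
        exact D3_add φ _ _ g h k γ
      rw [h3, D3_const, D3_lift_const φ hf, hc g h k]
      ring
    simp only [D3, Pi.add_apply, Pi.sub_apply] at h1 ⊢
    omega
  obtain ⟨Ψ, hΨ⟩ := h2_vanish φ hφ X hXc
  refine ⟨Ψ, fun g h => ?_⟩
  have h4 : f g h = mkJ (X g h) := by
    rw [hX]
    simp only [map_sub, mkJ_liftF]
    have : mkJ (fun _ => c g h : Γ → ℤ) = 0 := mkJ_eq_zero.mpr ⟨c g h, rfl⟩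
    rw [this, sub_zero]
  rw [h4, hΨ g h]
  simp [map_add, map_sub]

end Connecting
section CyclicVanish

/-- `H³(C, ℤ) = 0` for a finite cyclic group: every trivial-action integral
3-cocycle is a coboundary. Proved by ℚ-averaging plus the divisibility argument. -/
lemma cyclic_H3Z_vanish {G : Type} [Group G] [Finite G] (τ : G)
    (hτ : ∀ x : G, x ∈ Subgroup.zpowers τ)
    (e : G → G → G → ℤ)
    (he : ∀ g h k l, e h k l + e g (h * k) l + e g h k = e (g * h) k l + e g h (k * l)) :
    ∃ c : G → G → ℤ, ∀ g h k, e g h k = c h k - c (g * h) k + c g (h * k) - c g h := by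
  classical
  letI : Fintype G := Fintype.ofFinite G
  set n : ℕ := Fintype.card G with hn
  have hnpos : 0 < n := Fintype.card_pos
  have hnQ : (n : ℚ) ≠ 0 := by positivity
  -- Step 1: averaging over ℚ
  set S : G → G → ℚ := fun g h => ∑ l : G, (e g h l : ℚ) with hS
  have hs : ∀ g h k : G, S h k + S g (h * k) + n * e g h k = S (g * h) k + S g h := by
    intro g h k
    have h1 : ∑ l : G, ((e g h (k * l) : ℚ)) = S g h := by
      rw [hS]
      exact Fintype.sum_equiv (Equiv.mulLeft k) _ _ (fun l => rfl)
    have h2 : ∑ l : G, (((e h k l : ℚ) + e g (h * k) l + e g h k))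
        = ∑ l : G, (((e (g * h) k l : ℚ) + e g h (k * l))) := by
      apply Finset.sum_congr rfl
      intro l _
      have := he g h k l
      push_cast
      exact_mod_cast congrArg (fun z : ℤ => (z : ℚ)) this
    simp only [Finset.sum_add_distrib, Finset.sum_const, Finset.card_univ, nsmul_eq_mul] at h2
    rw [h1] at h2
    simp only [hS] at h2 ⊢
    linarith [h2]
  set φq : G → G → ℚ := fun g h => -(S g h) / n with hφq
  have key : ∀ g h k : G, (e g h k : ℚ) = φq h k - φq (g * h) k + φq g (h * k) - φq g h := by
    intro g h k
    have h0 := hs g h k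
    have h1 : (e g h k : ℚ) = (S (g * h) k + S g h - S h k - S g (h * k)) / n := by
      field_simp
      linarith
    rw [h1, hφq]
    ring
  -- Step 2: pass to ℚ/ℤ
  set QQ := ℚ ⧸ AddSubgroup.zmultiples (1 : ℚ) with hQQ
  set mq : ℚ →+ QQ := QuotientAddGroup.mk' _ with hmq
  have hint : ∀ m : ℤ, mq (m : ℚ) = 0 := by
    intro m
    refine (QuotientAddGroup.eq_zero_iff _).mpr ⟨m, by simp⟩
  set ψ : G → G → QQ := fun g h => mq (φq g h) with hψdef
  have hψ : ∀ g h k : G, ψ h k + ψ g (h * k) = ψ (g * h) k + ψ g h := by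
    intro g h k
    have h0 : (0 : QQ) = ψ h k - ψ (g * h) k + ψ g (h * k) - ψ g h := by
      have := congrArg mq (key g h k)
      rw [hint] at this
      simpa [map_sub, map_add, hψdef] using this
    calc ψ h k + ψ g (h * k)
        = (ψ h k - ψ (g * h) k + ψ g (h * k) - ψ g h) + (ψ (g * h) k + ψ g h) := by abel
      _ = ψ (g * h) k + ψ g h := by rw [← h0, zero_add]
  -- Step 3: the cyclic computation in ℚ/ℤ
  set n' : ℕ := orderOf τ with hn'
  have hn'pos : 0 < n' := orderOf_pos τ
  have hex : ∀ x : G, ∃ m : ℕ, τ ^ m = x := by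
    intro x
    obtain ⟨k, hk⟩ := Subgroup.mem_zpowers_iff.mp (hτ x)
    refine ⟨(k % (n' : ℤ)).toNat, ?_⟩
    have hnn : (0 : ℤ) ≤ k % (n' : ℤ) := Int.emod_nonneg k (by exact_mod_cast hn'pos.ne')
    rw [← hk, ← zpow_natCast, Int.toNat_of_nonneg hnn, hn']
    exact zpow_mod_orderOf τ k
  set ex : G → ℕ := fun x => Classical.choose (hex x) with hexdef
  have hex' : ∀ x, τ ^ ex x = x := fun x => Classical.choose_spec (hex x)
  set Sv : ℕ → QQ := fun m => ∑ j ∈ Finset.range m, ψ (τ ^ j) τ with hSv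
  set ε : QQ := ψ 1 1 with hε
  have hψ1 : ∀ g : G, ψ g 1 = ε := by
    intro g
    have h1 := hψ g 1 1
    simp only [mul_one, one_mul] at h1
    -- h1 : ψ 1 1 + ψ g 1 = ψ g 1 + ψ g 1
    have := add_right_cancel h1
    rw [hε, this]
  have L1 : ∀ i j : ℕ, ψ (τ ^ i) (τ ^ j) = Sv (i + j) - Sv i - Sv j + ε := by
    intro i j
    induction j with
    | zero =>
      simp only [pow_zero, Nat.add_zero, hSv, Finset.range_zero, Finset.sum_empty]
      rw [hψ1 (τ ^ i)]
      abel
    | succ j ih =>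
      have h1 := hψ (τ ^ i) (τ ^ j) τ
      rw [← pow_succ, ← pow_add] at h1
      -- h1 : ψ (τ^j) τ + ψ (τ^i) (τ^(j+1)) = ψ (τ^(i+j)) τ + ψ (τ^i) (τ^j)
      have h2 : ψ (τ ^ i) (τ ^ (j + 1))
          = ψ (τ ^ (i + j)) τ + ψ (τ ^ i) (τ ^ j) - ψ (τ ^ j) τ := by
        rw [eq_sub_iff_add_eq, add_comm]
        exact h1
      rw [h2, ih]
      have h3 : Sv (i + (j + 1)) = Sv (i + j) + ψ (τ ^ (i + j)) τ := by
        rw [show i + (j + 1) = (i + j) + 1 by ring, hSv]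
        exact Finset.sum_range_succ _ _
      have h4 : Sv (j + 1) = Sv j + ψ (τ ^ j) τ := by
        rw [hSv]; exact Finset.sum_range_succ _ _
      rw [h3, h4]
      abel
  have L2a : ∀ m : ℕ, Sv (m + n') = Sv m + Sv n' := by
    intro m
    induction m with
    | zero => simp [hSv]
    | succ m ih =>
      have h1 : Sv (m + 1 + n') = Sv (m + n') + ψ (τ ^ (m + n')) τ := by
        rw [show m + 1 + n' = (m + n') + 1 by ring, hSv]
        exact Finset.sum_range_succ _ _
      have h2 : τ ^ (m + n') = τ ^ m := by
        rw [pow_add, hn', pow_orderOf_eq_one, mul_one]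
      have h3 : Sv (m + 1) = Sv m + ψ (τ ^ m) τ := by
        rw [hSv]; exact Finset.sum_range_succ _ _
      rw [h1, h2, ih, h3]
      abel
  have L2b : ∀ q m : ℕ, Sv (m + q * n') = Sv m + q • Sv n' := by
    intro q
    induction q with
    | zero => simp
    | succ q ih =>
      intro m
      rw [show m + (q + 1) * n' = (m + q * n') + n' by ring, L2a, ih m, succ_nsmul]
      abel
  set Aq : ℚ := ∑ j ∈ Finset.range n', φq (τ ^ j) τ with hAq
  set abar : QQ := mq (Aq / n') with habar
  have ha : n' • abar = Sv n' := by
    have h1 : Sv n' = mq Aq := by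
      rw [hSv, hAq, map_sum]
    rw [h1, habar, ← map_nsmul]
    congr 1
    have hn'Q : (n' : ℚ) ≠ 0 := by exact_mod_cast hn'pos.ne'
    rw [nsmul_eq_mul]
    field_simp
  have Lfin : ∀ m m' : ℕ, τ ^ m = τ ^ m' → Sv m + m' • abar = Sv m' + m • abar := by
    intro m m' hmm'
    have hmod : m % n' = m' % n' := pow_eq_pow_iff_modEq.mp hmm'
    have hrep : ∀ t : ℕ, Sv t = Sv (t % n') + (t / n') • Sv n' := by
      intro t
      conv_lhs => rw [← Nat.mod_add_div' t n']
      exact L2b (t / n') (t % n')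
    have hsm : ∀ t : ℕ, t • abar = (t % n') • abar + (t / n') • Sv n' := by
      intro t
      conv_lhs => rw [← Nat.mod_add_div' t n']
      rw [add_nsmul, mul_comm, mul_nsmul, ha]
    rw [hrep m, hrep m', hsm m, hsm m', hmod]
    abel
  set χb : G → QQ := fun x => -Sv (ex x) + (ex x) • abar + ε with hχb
  have hχ : ∀ g h : G, ψ g h = χb g + χb h - χb (g * h) := by
    intro g h
    have h1 : ψ g h = ψ (τ ^ ex g) (τ ^ ex h) := by rw [hex' g, hex' h]
    rw [h1, L1]
    have h2 : τ ^ (ex g + ex h) = τ ^ (ex (g * h)) := by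
      rw [pow_add, hex', hex', hex']
    have h3 := Lfin _ _ h2
    simp only [hχb]
    have h5 : Sv (ex g + ex h)
        = Sv (ex (g * h)) + (ex g + ex h) • abar - ex (g * h) • abar := by
      calc Sv (ex g + ex h)
          = (Sv (ex g + ex h) + ex (g * h) • abar) - ex (g * h) • abar := by abel
        _ = _ := by rw [h3]
    rw [h5]
    simp only [add_nsmul]
    abel
  -- Step 4: back to ℤ
  set χr : G → ℚ := fun x => Quotient.out (χb x) with hχr
  have hχrq : ∀ x, mq (χr x) = χb x := fun x => QuotientAddGroup.out_eq' _
  set c0 : G → G → ℚ := fun g h => φq g h - χr g - χr h + χr (g * h) with hc0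
  have hc0z : ∀ g h, ∃ m : ℤ, c0 g h = (m : ℚ) := by
    intro g h
    have h1 : mq (c0 g h) = 0 := by
      rw [hc0]
      simp only [map_sub, map_add, hχrq]
      rw [show mq (φq g h) = ψ g h from rfl, hχ g h]
      abel
    obtain ⟨m, hm⟩ := (QuotientAddGroup.eq_zero_iff _).mp h1
    exact ⟨m, by rw [← hm]; simp [zsmul_eq_mul]⟩
  set c : G → G → ℤ := fun g h => Classical.choose (hc0z g h) with hcdef
  have hcq : ∀ g h, (c g h : ℚ) = c0 g h := fun g h => (Classical.choose_spec (hc0z g h)).symm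
  refine ⟨c, fun g h k => ?_⟩
  have hQ : (e g h k : ℚ) = (c h k : ℚ) - c (g * h) k + c g (h * k) - c g h := by
    rw [hcq, hcq, hcq, hcq, key g h k]
    simp only [hc0, mul_assoc]
    ring
  exact_mod_cast hQ

end CyclicVanish
section Assembly

variable {Γ : Type} [Group Γ] {G : Type} [Group G] (φ : G →* Γ)

/-- Comparing `errF` computed from the canonical lift with any other lift. -/
lemma errF_diff (f : G → G → JLat Γ) (F₁ : G → G → Γ → ℤ)
    (hmk : ∀ g h, mkJ (F₁ g h) = f g h) :
    ∃ c : G → G → ℤ, ∀ g h k, errF φ f g h k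
      = D3 φ F₁ g h k 1 + (c h k - c (g * h) k + c g (h * k) - c g h) := by
  set c : G → G → ℤ := fun g h => (liftF f g h - F₁ g h) 1 with hcdef
  have hΔ : ∀ g h, liftF f g h = F₁ g h + (fun _ => c g h : Γ → ℤ) := by
    intro g h
    have h0 : mkJ (liftF f g h - F₁ g h) = 0 := by
      rw [map_sub, mkJ_liftF, hmk, sub_self]
    obtain ⟨m, hm⟩ := mkJ_eq_zero.mp h0
    funext δ
    have h1 : (liftF f g h - F₁ g h) δ = m := by rw [hm]
    have h2 : (liftF f g h - F₁ g h) 1 = m := by rw [hm]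
    simp only [Pi.sub_apply] at h1 h2
    simp only [Pi.add_apply, hcdef, Pi.sub_apply]
    omega
  refine ⟨c, fun g h k => ?_⟩
  have h3 : liftF f = fun a b => F₁ a b + (fun _ => c a b : Γ → ℤ) := by
    funext a b
    exact hΔ a b
  show D3 φ (liftF f) g h k 1 = _
  rw [h3, D3_add, D3_const]

/-- Combination: over a finite cyclic group, every 2-cocycle in `J` (phrased via
lifts) is a coboundary. -/
lemma cyclic_coboundary [Finite G] (hφ : Function.Injective φ) (τ : G)
    (hτ : ∀ x : G, x ∈ Subgroup.zpowers τ)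
    {f : G → G → JLat Γ} (hf : LCoc φ f) :
    ∃ Ψ : G → Γ → ℤ, ∀ g h,
      f g h = mkJ (shiftHom (φ g) (Ψ h)) + mkJ (Ψ g) - mkJ (Ψ (g * h)) := by
  obtain ⟨c, hc⟩ := cyclic_H3Z_vanish τ hτ (errF φ f)
    (fun g h k l => errF_cocycle φ hf g h k l)
  exact main_coboundary φ hφ hf c hc

end Assembly

private lemma zhelp1 (a b c d x y : ℤ) (h : x = y + (a - b + c - d)) :
    -x + y = -a - -b + -c - -d := by omega

private lemma zhelp2 (a b c d x : ℤ) (h : x = 0 + (a - b + c - d)) :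
    x = a - b + c - d := by omega
theorem sha2_JLat_iso_H3 (Γ : Type) [Group Γ] [Fintype Γ] (Γ' : Subgroup Γ) :
    Nonempty (Sha2 Γ' (JLat Γ) ≃+ H3 Γ' (TrivAct Γ' ℤ)) := by
  classical
  set J := JLat Γ with hJ
  set φ : ↥Γ' →* Γ := Γ'.subtype with hφdef
  have hφinj : Function.Injective φ := Γ'.subtype_injective
  -- translation between the subgroup action and lifts
  have hsm : ∀ (g : ↥Γ') (x : Γ → ℤ), g • (mkJ x) = mkJ (shiftHom (φ g) x) :=
    fun g x => smul_mkJ (g : Γ) x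
  have hLC : ∀ f : ↥Γ' → ↥Γ' → J, IsCocycle2 Γ' J f → LCoc φ f := by
    intro f hf g h k
    have h1 := hf g h k
    rw [show mkJ (shiftHom (φ g) (liftF f h k)) = g • (f h k) by
      rw [← hsm g (liftF f h k), mkJ_liftF]]
    exact h1
  -- the connecting 3-cocycle
  have hErr3 : ∀ f : ↥(shaCocycles Γ' J), IsCocycle3 Γ' (TrivAct Γ' ℤ) (errF φ (↑f : ↥Γ' → ↥Γ' → J)) := by
    intro f g h k l
    have := errF_cocycle φ (hLC _ f.2.1) g h k l
    exact this
  set E : ↥(shaCocycles Γ' J) → ↥(cocycles3 Γ' (TrivAct Γ' ℤ)) :=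
    fun f => ⟨errF φ (↑f : ↥Γ' → ↥Γ' → J), hErr3 f⟩ with hE
  set T0 : ↥(shaCocycles Γ' J) → H3 Γ' (TrivAct Γ' ℤ) :=
    fun f => QuotientAddGroup.mk (E f) with hT0
  -- additivity of T0
  have hT0add : ∀ f₁ f₂, T0 (f₁ + f₂) = T0 f₁ + T0 f₂ := by
    intro f₁ f₂
    show QuotientAddGroup.mk (E (f₁ + f₂))
      = QuotientAddGroup.mk (E f₁) + QuotientAddGroup.mk (E f₂)
    rw [← QuotientAddGroup.mk_add, QuotientAddGroup.eq, AddSubgroup.mem_addSubgroupOf]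
    obtain ⟨c, hc⟩ := errF_diff φ (↑(f₁ + f₂) : ↥Γ' → ↥Γ' → J)
      (fun g h => liftF (↑f₁ : ↥Γ' → ↥Γ' → J) g h + liftF (↑f₂ : ↥Γ' → ↥Γ' → J) g h)
      (by intro g h; rw [map_add, mkJ_liftF, mkJ_liftF]; rfl)
    refine ⟨fun g h => -(c g h), fun g h k => ?_⟩
    have h1 := hc g h k
    rw [D3_add] at h1
    have h2 : D3 φ (liftF (↑f₁ : ↥Γ' → ↥Γ' → J)) g h k 1 = errF φ (↑f₁ : ↥Γ' → ↥Γ' → J) g h k := rfl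
    have h3 : D3 φ (liftF (↑f₂ : ↥Γ' → ↥Γ' → J)) g h k 1 = errF φ (↑f₂ : ↥Γ' → ↥Γ' → J) g h k := rfl
    rw [h2, h3] at h1
    exact zhelp1 _ _ _ _ _ _ h1
  set Thom : ↥(shaCocycles Γ' J) →+ H3 Γ' (TrivAct Γ' ℤ) := AddMonoidHom.mk' T0 hT0add with hThom
  -- coboundaries are killed
  have hker : ∀ f : ↥(shaCocycles Γ' J),
      (↑f : ↥Γ' → ↥Γ' → J) ∈ coboundaries2 Γ' J → Thom f = 0 := by
    intro f hf
    obtain ⟨w, hw⟩ := hf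
    set W : ↥Γ' → Γ → ℤ := fun g => Quotient.out (w g) with hW
    obtain ⟨c, hc⟩ := errF_diff φ (↑f : ↥Γ' → ↥Γ' → J)
      (fun g h => shiftHom (φ g) (W h) + W g - W (g * h))
      (by
        intro g h
        rw [map_sub, map_add, ← hsm g (W h)]
        simp only [hW, mkJ_out]
        exact (hw g h).symm)
    show QuotientAddGroup.mk (E f) = 0
    rw [QuotientAddGroup.eq_zero_iff, AddSubgroup.mem_addSubgroupOf]
    refine ⟨c, fun g h k => ?_⟩
    have h1 := hc g h k
    rw [D3_d2] at h1
    exact zhelp2 _ _ _ _ _ h1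
  set Tbar : Sha2 Γ' J →+ H3 Γ' (TrivAct Γ' ℤ) :=
    QuotientAddGroup.lift _ Thom
      (by intro f hf; exact hker f (AddSubgroup.mem_addSubgroupOf.mp hf)) with hTbar
  -- injectivity
  have hinj : Function.Injective Tbar := by
    rw [injective_iff_map_eq_zero]
    intro x hx
    refine QuotientAddGroup.induction_on x (fun f hf => ?_) hx
    have h0 : Thom f = 0 := hf
    have h1 : (E f).1 ∈ coboundaries3 Γ' (TrivAct Γ' ℤ) := by
      have := (QuotientAddGroup.eq_zero_iff (E f)).mp h0
      exact AddSubgroup.mem_addSubgroupOf.mp this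
    obtain ⟨c, hc⟩ := h1
    have hc' : ∀ g h k, errF φ (↑f : ↥Γ' → ↥Γ' → J) g h k
        = c h k - c (g * h) k + c g (h * k) - c g h := by
      intro g h k
      have := hc g h k
      exact this
    obtain ⟨Ψ, hΨ⟩ := main_coboundary φ hφinj (hLC _ f.2.1) c hc'
    rw [QuotientAddGroup.eq_zero_iff, AddSubgroup.mem_addSubgroupOf]
    refine ⟨fun g => mkJ (Ψ g), fun g h => ?_⟩
    rw [hsm g (Ψ h)]
    exact hΨ g h
  -- surjectivity
  have hsurj : Function.Surjective Tbar := by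
    intro y
    refine QuotientAddGroup.induction_on y (fun e' => ?_)
    set e : ↥Γ' → ↥Γ' → ↥Γ' → ℤ := (e' : ↥Γ' → ↥Γ' → ↥Γ' → TrivAct Γ' ℤ) with he
    have hep : ∀ g h k l : ↥Γ',
        e h k l + e g (h * k) l + e g h k = e (g * h) k l + e g h (k * l) := by
      intro g h k l
      have := e'.2 g h k l
      exact this
    obtain ⟨Φ, hΦ⟩ := h3_vanish φ hφinj (fun g h k => (fun _ => e g h k : Γ → ℤ))
      (by
        intro g h k l
        funext γ
        simp only [Pi.add_apply, shiftHom_apply]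
        exact hep g h k l)
    have hDΦ : ∀ g h k, D3 φ Φ g h k = (fun _ => e g h k : Γ → ℤ) :=
      fun g h k => (hΦ g h k).symm
    set f : ↥Γ' → ↥Γ' → J := fun g h => mkJ (Φ g h) with hf
    have hmkD : ∀ g h k : ↥Γ', mkJ (D3 φ Φ g h k) = 0 := by
      intro g h k
      rw [hDΦ]
      exact mkJ_eq_zero.mpr ⟨e g h k, rfl⟩
    have hfcoc : IsCocycle2 Γ' J f := by
      intro g h k
      have h0 := hmkD g h k
      simp only [D3, map_sub, map_add] at h0
      have h1 : g • f h k = mkJ (shiftHom (φ g) (Φ h k)) := hsm g (Φ h k)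
      rw [hf]
      rw [h1]
      calc mkJ (shiftHom (φ g) (Φ h k)) + mkJ (Φ g (h * k))
          = (mkJ (shiftHom (φ g) (Φ h k)) - mkJ (Φ (g * h) k) + mkJ (Φ g (h * k))
              - mkJ (Φ g h)) + (mkJ (Φ (g * h) k) + mkJ (Φ g h)) := by abel
        _ = mkJ (Φ (g * h) k) + mkJ (Φ g h) := by rw [h0, zero_add]
    have hfsha : f ∈ shaCocycles Γ' J := by
      refine ⟨hfcoc, fun C hC => ?_⟩
      obtain ⟨τ, hτ⟩ := @IsCyclic.exists_generator _ _ hC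
      set φC : ↥C →* Γ := φ.comp C.subtype with hφC
      have hφCinj : Function.Injective φC := hφinj.comp C.subtype_injective
      set fC : ↥C → ↥C → J := fun a b => f ↑a ↑b with hfC
      have hsmC : ∀ (a : ↥C) (x : Γ → ℤ), a • (mkJ x) = mkJ (shiftHom (φC a) x) :=
        fun a x => smul_mkJ ((a : ↥Γ') : Γ) x
      have hLCC : LCoc φC fC := by
        intro a b c
        have h1 := hfcoc (↑a) (↑b) (↑c)
        rw [show mkJ (shiftHom (φC a) (liftF fC b c)) = (↑a : ↥Γ') • (fC b c) by
          rw [← hsmC a (liftF fC b c), mkJ_liftF]; rfl]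
        exact h1
      obtain ⟨Ψ, hΨ⟩ := cyclic_coboundary φC hφCinj τ hτ hLCC
      refine ⟨fun a => mkJ (Ψ a), fun a b => ?_⟩
      rw [hsmC a (Ψ b)]
      exact hΨ a b
    refine ⟨QuotientAddGroup.mk ⟨f, hfsha⟩, ?_⟩
    show QuotientAddGroup.mk (E ⟨f, hfsha⟩) = QuotientAddGroup.mk e'
    rw [QuotientAddGroup.eq, AddSubgroup.mem_addSubgroupOf]
    obtain ⟨c, hc⟩ := errF_diff φ f Φ (fun g h => rfl)
    refine ⟨fun g h => -(c g h), fun g h k => ?_⟩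
    have h1 := hc g h k
    have h2 : D3 φ Φ g h k 1 = e g h k := by rw [hDΦ]
    rw [h2] at h1
    exact zhelp1 _ _ _ _ _ _ h1
  exact ⟨AddEquiv.ofBijective Tbar ⟨hinj, hsurj⟩⟩
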